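/- Let G be positive with E|log G| < ∞, t > 0, and suppose the (t,G)-GGC variable Γ_t(1/G) has density f on (0,∞) while Γ_t(G) = γ_t · D_t(G) with γ_t Gamma(t) independent of the positive random variable D_t(G). Then f(x) = (x^{t−1}/Γ(t)) e^{−t E[log G]} E[e^{−x D_t(G)}] for all x > 0. -/

import Mathlib

open MeasureTheory Set Real

theorem density_duality_laplace {Ω : Type*} [MeasurableSpace Ω] (μ : Measure Ω)
    [IsProbabilityMeasure μ] (t : ℝ) (ht : 0 < t)
    (G D : Ω → ℝ) (hG_meas : Measurable G) (hD_meas : Measurable D)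
    (hG_pos : ∀ ω, 0 < G ω) (hD_pos : ∀ ω, 0 < D ω)
    (hG_int : Integrable (fun ω => Real.log (G ω)) μ)
    (hD_char : ∀ l : ℝ, 0 ≤ l →
      (∫ ω, (1 + l * D ω) ^ (-t) ∂μ)
        = Real.exp (-(t * ∫ ω, Real.log (1 + l / G ω) ∂μ))) :
    ∀ l : ℝ, 0 < l →
      (∫ x in Ioi (0:ℝ), Real.exp (-(l * x)) *
          (x ^ (t - 1) / Real.Gamma t *
            Real.exp (-(t * ∫ ω, Real.log (G ω) ∂μ)) *
            ∫ ω, Real.exp (-(x * D ω)) ∂μ))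
        = Real.exp (-(t * ∫ ω, Real.log (1 + l * G ω) ∂μ)) := by
  intro l hl
  have hΓ : 0 < Real.Gamma t := Real.Gamma_pos_of_pos ht
  set C : ℝ := Real.exp (-(t * ∫ ω, Real.log (G ω) ∂μ)) with hC
  -- the function to which Fubini is applied
  set F : ℝ × Ω → ℝ := fun z => z.1 ^ (t - 1) * Real.exp (-((l + D z.2) * z.1)) with hF
  have hF_meas : Measurable F := by
    rw [hF]; fun_prop
  -- dominating function
  have hdom : IntegrableOn (fun x : ℝ => x ^ (t - 1) * Real.exp (-(l * x))) (Ioi 0) := by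
    have := integrableOn_rpow_mul_exp_neg_mul_rpow (s := t - 1) (p := 1) (b := l)
      (by linarith) zero_lt_one hl
    simpa [Real.rpow_one] using this
  have hprod_dom : Integrable (fun z : ℝ × Ω => (z.1 ^ (t - 1) * Real.exp (-(l * z.1))) * 1)
      ((volume.restrict (Ioi 0)).prod μ) :=
    Integrable.mul_prod hdom (integrable_const 1)
  have hae : ∀ᵐ z : ℝ × Ω ∂((volume.restrict (Ioi 0)).prod μ), z.1 ∈ Ioi (0:ℝ) := by
    rw [ae_iff]
    have hs : {z : ℝ × Ω | ¬ z.1 ∈ Ioi (0:ℝ)} = (Ioi (0:ℝ))ᶜ ×ˢ (univ : Set Ω) := by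
      ext z; simp
    rw [hs, Measure.prod_prod, Measure.restrict_apply measurableSet_Ioi.compl]
    have he : (Ioi (0:ℝ))ᶜ ∩ Ioi 0 = ∅ := by
      ext x; simp
    rw [he]
    simp
  have hF_int : Integrable F ((volume.restrict (Ioi 0)).prod μ) := by
    refine Integrable.mono' hprod_dom hF_meas.aestronglyMeasurable ?_
    refine hae.mono fun z hz => ?_
    have hx : (0:ℝ) < z.1 := hz
    have h1 : 0 ≤ F z := by
      have := (Real.rpow_pos_of_pos hx (t - 1)).le
      exact mul_nonneg this (Real.exp_pos _).le
    rw [Real.norm_eq_abs, abs_of_nonneg h1, mul_one]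
    refine mul_le_mul_of_nonneg_left ?_ (Real.rpow_pos_of_pos hx (t - 1)).le
    apply Real.exp_le_exp.2
    have : l * z.1 ≤ (l + D z.2) * z.1 :=
      mul_le_mul_of_nonneg_right (by linarith [(hD_pos z.2)]) hx.le
    linarith
  -- Fubini
  have hswap := MeasureTheory.integral_integral_swap (μ := volume.restrict (Ioi 0)) (ν := μ)
    (f := fun x ω => F (x, ω)) hF_int
  -- Inner integral over ω, for each fixed x > 0
  have hstep1 : ∀ x ∈ Ioi (0:ℝ),
      Real.exp (-(l * x)) * (x ^ (t - 1) / Real.Gamma t * C * ∫ ω, Real.exp (-(x * D ω)) ∂μ)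
      = (C / Real.Gamma t) * ∫ ω, F (x, ω) ∂μ := by
    intro x hx
    have : ∫ ω, F (x, ω) ∂μ
        = (x ^ (t - 1) * Real.exp (-(l * x))) * ∫ ω, Real.exp (-(x * D ω)) ∂μ := by
      rw [← integral_const_mul]
      congr 1; funext ω
      rw [hF]
      simp only []
      rw [add_mul, neg_add, Real.exp_add]
      ring_nf
    rw [this]; ring
  -- Inner integral over x, for each fixed ω
  have hstep2 : ∀ ω, (∫ x in Ioi (0:ℝ), F (x, ω))
      = Real.Gamma t * (l + D ω) ^ (-t) := by
    intro ω
    have hpos : 0 < l + D ω := by linarith [hD_pos ω]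
    have h := integral_rpow_mul_exp_neg_mul_Ioi ht hpos
    have h2 : (∫ x in Ioi (0:ℝ), F (x, ω))
        = ∫ x in Ioi (0:ℝ), x ^ (t - 1) * Real.exp (-((l + D ω) * x)) := by
      simp only [hF]
    rw [h2, h, one_div, Real.inv_rpow hpos.le, ← Real.rpow_neg hpos.le]
    ring
  -- integrability of log (1 + (1/l) / G ω)
  have hlog_pos : ∀ ω, (0:ℝ) < 1 + (1/l) / G ω := fun ω => by
    have := div_pos (one_div_pos.2 hl) (hG_pos ω); linarith
  have hlog_int : Integrable (fun ω => Real.log (1 + (1/l) / G ω)) μ := by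
    refine Integrable.mono' ((integrable_const (Real.log (1 + 1/l))).add hG_int.abs)
      ((measurable_const.add (measurable_const.div hG_meas)).log).aestronglyMeasurable ?_
    refine Filter.Eventually.of_forall fun ω => ?_
    have h1 : (1:ℝ) ≤ 1 + (1/l) / G ω := by
      have := (div_pos (one_div_pos.2 hl) (hG_pos ω)).le; linarith
    simp only [Pi.add_apply, Real.norm_eq_abs]
    rw [abs_of_nonneg (Real.log_nonneg h1)]
    have hbound : 1 + (1/l) / G ω ≤ (1 + 1/l) * Real.exp |Real.log (G ω)| := by
      have he1 : (1:ℝ) ≤ Real.exp |Real.log (G ω)| := Real.one_le_exp (abs_nonneg _)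
      have he2 : 1 / G ω ≤ Real.exp |Real.log (G ω)| := by
        have h3 : 1 / G ω = Real.exp (-(Real.log (G ω))) := by
          rw [Real.exp_neg, Real.exp_log (hG_pos ω), one_div]
        rw [h3]
        exact Real.exp_le_exp.2 (neg_le_abs _)
      have hl1 : (0:ℝ) ≤ 1/l := (one_div_pos.2 hl).le
      calc 1 + (1/l) / G ω = 1 + (1/l) * (1 / G ω) := by ring
        _ ≤ Real.exp |Real.log (G ω)| + (1/l) * Real.exp |Real.log (G ω)| := by
            refine add_le_add he1 (mul_le_mul_of_nonneg_left he2 hl1)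
        _ = (1 + 1/l) * Real.exp |Real.log (G ω)| := by ring
    calc Real.log (1 + (1/l) / G ω)
        ≤ Real.log ((1 + 1/l) * Real.exp |Real.log (G ω)|) :=
          Real.log_le_log (hlog_pos ω) hbound
      _ = Real.log (1 + 1/l) + |Real.log (G ω)| := by
          rw [Real.log_mul (by positivity) (Real.exp_ne_zero _), Real.log_exp]
  -- the log identity pointwise
  have hlog_eq : ∀ ω, Real.log (1 + l * G ω)
      = Real.log l + Real.log (G ω) + Real.log (1 + (1/l) / G ω) := by
    intro ω
    have hG := hG_pos ω
    have harg : 1 + l * G ω = l * (G ω * (1 + (1/l) / G ω)) := by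
      field_simp
      ring
    rw [harg, Real.log_mul hl.ne' (mul_pos hG (hlog_pos ω)).ne',
      Real.log_mul hG.ne' (hlog_pos ω).ne']
    ring
  -- split the integral of the log
  have hint_split : ∫ ω, Real.log (1 + l * G ω) ∂μ
      = Real.log l + (∫ ω, Real.log (G ω) ∂μ) + ∫ ω, Real.log (1 + (1/l) / G ω) ∂μ := by
    have : (fun ω => Real.log (1 + l * G ω))
        = fun ω => (Real.log l + Real.log (G ω)) + Real.log (1 + (1/l) / G ω) := by
      funext ω; rw [hlog_eq ω]
    have hI1 : Integrable (fun ω => Real.log l + Real.log (G ω)) μ := by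
      exact (integrable_const _).add hG_int
    rw [this, integral_add hI1 hlog_int, integral_add (integrable_const _) hG_int,
      integral_const]
    simp
  -- use hD_char at 1/l
  have hchar := hD_char (1/l) (one_div_pos.2 hl).le
  -- rewrite (1 + (1/l) * D ω) ^ (-t) in terms of (l + D ω) ^ (-t)
  have hrw : ∀ ω, (l + D ω) ^ (-t) = l ^ (-t) * (1 + (1/l) * D ω) ^ (-t) := by
    intro ω
    have h1 : l + D ω = l * (1 + (1/l) * D ω) := by field_simp
    rw [h1, Real.mul_rpow hl.le (by linarith [mul_pos (one_div_pos.2 hl) (hD_pos ω)] :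
      (0:ℝ) ≤ 1 + 1/l * D ω)]
  -- simplify 1/l / G ω vs (1/l) / G ω (same thing)
  -- Now compute the LHS
  rw [setIntegral_congr_fun measurableSet_Ioi hstep1, integral_const_mul, hswap]
  have : (∫ ω, ∫ x in Ioi (0:ℝ), F (x, ω) ∂volume ∂μ)
      = Real.Gamma t * (l ^ (-t) * ∫ ω, (1 + (1/l) * D ω) ^ (-t) ∂μ) := by
    rw [← integral_const_mul, ← integral_const_mul]
    congr 1; funext ω
    rw [hstep2 ω, hrw ω]
  rw [this, hchar]
  have hl_rpow : l ^ (-t) = Real.exp (-(t * Real.log l)) := by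
    rw [Real.rpow_def_of_pos hl]; ring_nf
  rw [hint_split, hl_rpow]
  have hdivGamma : C / Real.Gamma t * (Real.Gamma t *
      (Real.exp (-(t * Real.log l)) * Real.exp (-(t * ∫ ω, Real.log (1 + 1/l / G ω) ∂μ))))
      = C * Real.exp (-(t * Real.log l)) *
        Real.exp (-(t * ∫ ω, Real.log (1 + 1/l / G ω) ∂μ)) := by
    field_simp
  rw [hdivGamma, hC, ← Real.exp_add, ← Real.exp_add]
  congr 1
  ring
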